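/- The complement of the zero locus of the D4 quiver semi-invariant is a single orbit: if (X, Y, Z) and (X', Y', Z') are triples of complex matrices of sizes β₄×β₁, β₄×β₂, β₄×β₃ with det[[X, Y, 0],[0, Y, Z]] ≠ 0 and det[[X', Y', 0],[0, Y', Z']] ≠ 0, then there exist invertible complex matrices g₁ ∈ GL(β₁), g₂ ∈ GL(β₂), g₃ ∈ GL(β₃), g₄ ∈ GL(β₄) such that X' = g₄ X g₁⁻¹, Y' = g₄ Y g₂⁻¹ and Z' = g₄ Z g₃⁻¹. -/

import Mathlib

/-- The `2β₄ × (β₁+β₂+β₃)` block matrix `[[X, Y, 0],[0, Y, Z]]`. -/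
def d4BlockMat10 {β₁ β₂ β₃ β₄ : ℕ}
    (X : Matrix (Fin β₄) (Fin β₁) ℂ) (Y : Matrix (Fin β₄) (Fin β₂) ℂ)
    (Z : Matrix (Fin β₄) (Fin β₃) ℂ) :
    Matrix (Fin β₄ ⊕ Fin β₄) (Fin β₁ ⊕ (Fin β₂ ⊕ Fin β₃)) ℂ :=
  Matrix.fromBlocks X (Matrix.fromCols Y 0) 0 (Matrix.fromCols Y Z)

/-- The canonical (order-preserving) identification of the row index set with the
column index set, using `β₁ + β₂ + β₃ = 2β₄`. -/
def d4Equiv10 {β₁ β₂ β₃ β₄ : ℕ} (h : β₁ + β₂ + β₃ = 2 * β₄) :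
    (Fin β₄ ⊕ Fin β₄) ≃ (Fin β₁ ⊕ (Fin β₂ ⊕ Fin β₃)) :=
  ((finSumFinEquiv.trans (finCongr (by omega : β₄ + β₄ = β₁ + (β₂ + β₃)))).trans
      finSumFinEquiv.symm).trans
    (Equiv.sumCongr (Equiv.refl (Fin β₁)) finSumFinEquiv.symm)

/-- The D4 semi-invariant evaluated at a triple of complex matrices `(X, Y, Z)`:
the determinant of the square block matrix `[[X, Y, 0],[0, Y, Z]]`. -/
def d4Det10 {β₁ β₂ β₃ β₄ : ℕ} (h : β₁ + β₂ + β₃ = 2 * β₄)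
    (X : Matrix (Fin β₄) (Fin β₁) ℂ) (Y : Matrix (Fin β₄) (Fin β₂) ℂ)
    (Z : Matrix (Fin β₄) (Fin β₃) ℂ) : ℂ :=
  ((d4BlockMat10 X Y Z).submatrix id (d4Equiv10 h)).det

open Matrix Submodule Module

/-- Nonvanishing of the D4 semi-invariant gives joint injectivity of the block matrix. -/
lemma d4_inj {β₁ β₂ β₃ β₄ : ℕ} (h : β₁ + β₂ + β₃ = 2 * β₄)
    {X : Matrix (Fin β₄) (Fin β₁) ℂ} {Y : Matrix (Fin β₄) (Fin β₂) ℂ}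
    {Z : Matrix (Fin β₄) (Fin β₃) ℂ} (hd : d4Det10 h X Y Z ≠ 0)
    (a : Fin β₁ → ℂ) (b : Fin β₂ → ℂ) (c : Fin β₃ → ℂ)
    (h1 : X *ᵥ a + Y *ᵥ b = 0) (h2 : Y *ᵥ b + Z *ᵥ c = 0) :
    a = 0 ∧ b = 0 ∧ c = 0 := by
  set e := d4Equiv10 h with he
  set N := (d4BlockMat10 X Y Z).submatrix _root_.id e with hN
  have hNdet : IsUnit N.det := isUnit_iff_ne_zero.2 hd
  set w : (Fin β₁ ⊕ (Fin β₂ ⊕ Fin β₃)) → ℂ := Sum.elim a (Sum.elim b c) with hw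
  have hMw : (d4BlockMat10 X Y Z) *ᵥ w = 0 := by
    unfold d4BlockMat10
    rw [Matrix.fromBlocks_mulVec]
    have e1 : w ∘ Sum.inl = a := rfl
    have e2 : w ∘ Sum.inr = Sum.elim b c := rfl
    rw [e1, e2, Matrix.fromCols_mulVec_sumElim, Matrix.fromCols_mulVec_sumElim,
      Matrix.zero_mulVec, Matrix.zero_mulVec]
    ext i
    cases i with
    | inl i => simpa using congrFun h1 i
    | inr i => simpa using congrFun h2 i
  have h0 : N *ᵥ (w ∘ e) = 0 := by
    rw [hN, Matrix.submatrix_mulVec_equiv]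
    have : (w ∘ ⇑e) ∘ ⇑e.symm = w := by
      funext k; simp
    rw [this, hMw]
    rfl
  have hwe : w ∘ ⇑e = 0 := by
    calc w ∘ ⇑e = 1 *ᵥ (w ∘ ⇑e) := (Matrix.one_mulVec _).symm
      _ = (N⁻¹ * N) *ᵥ (w ∘ ⇑e) := by rw [Matrix.nonsing_inv_mul N hNdet]
      _ = N⁻¹ *ᵥ (N *ᵥ (w ∘ ⇑e)) := by rw [Matrix.mulVec_mulVec]
      _ = 0 := by rw [h0, Matrix.mulVec_zero]
  have hw0 : w = 0 := by
    funext k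
    have := congrFun hwe (e.symm k)
    simpa using this
  refine ⟨funext fun i => ?_, funext fun i => ?_, funext fun i => ?_⟩
  · exact congrFun hw0 (Sum.inl i)
  · exact congrFun hw0 (Sum.inr (Sum.inl i))
  · exact congrFun hw0 (Sum.inr (Sum.inr i))

/-- Subspace structure forced by `A ⊓ B ⊓ C = ⊥` and the dimension count. -/
lemma d4_subspace_facts {V : Type*} [AddCommGroup V] [Module ℂ V] [FiniteDimensional ℂ V]
    (A B C : Submodule ℂ V) (habc : A ⊓ B ⊓ C = ⊥)
    (hsum : finrank ℂ A + finrank ℂ B + finrank ℂ C = 2 * finrank ℂ V) :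
    (A ⊓ B) ⊓ ((A ⊓ C) ⊔ (B ⊓ C)) = ⊥ ∧ (A ⊓ C) ⊓ (B ⊓ C) = ⊥ ∧
      (A ⊓ B) ⊔ ((A ⊓ C) ⊔ (B ⊓ C)) = ⊤ ∧
      A = (A ⊓ B) ⊔ (A ⊓ C) ∧ B = (A ⊓ B) ⊔ (B ⊓ C) ∧ C = (A ⊓ C) ⊔ (B ⊓ C) ∧
      finrank ℂ ↥(A ⊓ B) + finrank ℂ ↥(A ⊓ C) = finrank ℂ A ∧
      finrank ℂ ↥(A ⊓ B) + finrank ℂ ↥(B ⊓ C) = finrank ℂ B ∧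
      finrank ℂ ↥(A ⊓ C) + finrank ℂ ↥(B ⊓ C) = finrank ℂ C := by
  set D := A ⊓ B with hD
  set E := A ⊓ C with hE
  set F := B ⊓ C with hF
  have hDE : D ⊓ E = ⊥ := by
    rw [eq_bot_iff, ← habc]
    intro x hx
    rw [hD, hE] at hx
    simp only [Submodule.mem_inf] at hx ⊢
    exact ⟨⟨hx.1.1, hx.1.2⟩, hx.2.2⟩
  have hDF : D ⊓ F = ⊥ := by
    rw [eq_bot_iff, ← habc]
    intro x hx
    rw [hD, hF] at hx
    simp only [Submodule.mem_inf] at hx ⊢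
    exact ⟨⟨hx.1.1, hx.1.2⟩, hx.2.2⟩
  have hEF : E ⊓ F = ⊥ := by
    rw [eq_bot_iff, ← habc]
    intro x hx
    rw [hE, hF] at hx
    simp only [Submodule.mem_inf] at hx ⊢
    exact ⟨⟨hx.1.1, hx.2.1⟩, hx.1.2⟩
  have keyAB : finrank ℂ ↥(A ⊔ B) + finrank ℂ ↥D = finrank ℂ A + finrank ℂ B :=
    Submodule.finrank_sup_add_finrank_inf_eq A B
  have keyAC : finrank ℂ ↥(A ⊔ C) + finrank ℂ ↥E = finrank ℂ A + finrank ℂ C :=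
    Submodule.finrank_sup_add_finrank_inf_eq A C
  have keyBC : finrank ℂ ↥(B ⊔ C) + finrank ℂ ↥F = finrank ℂ B + finrank ℂ C :=
    Submodule.finrank_sup_add_finrank_inf_eq B C
  have leAB : finrank ℂ ↥(A ⊔ B) ≤ finrank ℂ V := Submodule.finrank_le _
  have leAC : finrank ℂ ↥(A ⊔ C) ≤ finrank ℂ V := Submodule.finrank_le _
  have leBC : finrank ℂ ↥(B ⊔ C) ≤ finrank ℂ V := Submodule.finrank_le _
  have supDE : finrank ℂ ↥(D ⊔ E) = finrank ℂ ↥D + finrank ℂ ↥E := by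
    have := Submodule.finrank_sup_add_finrank_inf_eq D E
    rw [hDE, finrank_bot] at this
    omega
  have supDF : finrank ℂ ↥(D ⊔ F) = finrank ℂ ↥D + finrank ℂ ↥F := by
    have := Submodule.finrank_sup_add_finrank_inf_eq D F
    rw [hDF, finrank_bot] at this
    omega
  have supEF : finrank ℂ ↥(E ⊔ F) = finrank ℂ ↥E + finrank ℂ ↥F := by
    have := Submodule.finrank_sup_add_finrank_inf_eq E F
    rw [hEF, finrank_bot] at this
    omega
  have hDEA : D ⊔ E ≤ A := sup_le inf_le_left inf_le_left
  have hDFB : D ⊔ F ≤ B := sup_le inf_le_right inf_le_left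
  have hEFC : E ⊔ F ≤ C := sup_le inf_le_right inf_le_right
  have leA : finrank ℂ ↥D + finrank ℂ ↥E ≤ finrank ℂ A := by
    rw [← supDE]; exact Submodule.finrank_mono hDEA
  have leB : finrank ℂ ↥D + finrank ℂ ↥F ≤ finrank ℂ B := by
    rw [← supDF]; exact Submodule.finrank_mono hDFB
  have leC : finrank ℂ ↥E + finrank ℂ ↥F ≤ finrank ℂ C := by
    rw [← supEF]; exact Submodule.finrank_mono hEFC
  have rA : finrank ℂ ↥D + finrank ℂ ↥E = finrank ℂ A := by omega
  have rB : finrank ℂ ↥D + finrank ℂ ↥F = finrank ℂ B := by omega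
  have rC : finrank ℂ ↥E + finrank ℂ ↥F = finrank ℂ C := by omega
  have hA : A = D ⊔ E :=
    (Submodule.eq_of_le_of_finrank_eq hDEA (by rw [supDE]; omega)).symm
  have hB : B = D ⊔ F :=
    (Submodule.eq_of_le_of_finrank_eq hDFB (by rw [supDF]; omega)).symm
  have hC : C = E ⊔ F :=
    (Submodule.eq_of_le_of_finrank_eq hEFC (by rw [supEF]; omega)).symm
  have hDEFbot : D ⊓ (E ⊔ F) = ⊥ := by
    rw [← hC]
    exact habc
  have hTop : D ⊔ (E ⊔ F) = ⊤ := by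
    apply Submodule.eq_top_of_finrank_eq
    have := Submodule.finrank_sup_add_finrank_inf_eq D (E ⊔ F)
    rw [hDEFbot, finrank_bot, supEF] at this
    omega
  exact ⟨hDEFbot, hEF, hTop, hA, hB, hC, rA, rB, rC⟩

lemma d4_map_eq_of_pointwise {V W : Type*} [AddCommGroup V] [Module ℂ V]
    [AddCommGroup W] [Module ℂ W] (φ : V ≃ₗ[ℂ] W) (p : Submodule ℂ V) (q : Submodule ℂ W)
    (φp : p ≃ₗ[ℂ] q) (hpt : ∀ u : p, φ ↑u = ↑(φp u)) :
    Submodule.map (φ : V →ₗ[ℂ] W) p = q := by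
  apply le_antisymm
  · rintro _ ⟨x, hx, rfl⟩
    have := hpt ⟨x, hx⟩
    simp only [LinearEquiv.coe_coe]
    rw [this]
    exact (φp ⟨x, hx⟩).2
  · intro y hy
    refine ⟨↑(φp.symm ⟨y, hy⟩), (φp.symm ⟨y, hy⟩).2, ?_⟩
    simp only [LinearEquiv.coe_coe]
    rw [hpt (φp.symm ⟨y, hy⟩), LinearEquiv.apply_symm_apply]

lemma d4_mkEquiv {V₀ : Type*} [AddCommGroup V₀] [Module ℂ V₀]
    (D E F : Submodule ℂ V₀) (h1 : D ⊓ (E ⊔ F) = ⊥) (h2 : E ⊓ F = ⊥)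
    (h3 : D ⊔ (E ⊔ F) = ⊤) :
    ∃ ψ : (D × (E × F)) ≃ₗ[ℂ] V₀,
      (∀ u : D, ψ (u, 0, 0) = ↑u) ∧ (∀ v : E, ψ (0, v, 0) = ↑v) ∧
        (∀ w : F, ψ (0, 0, w) = ↑w) := by
  set f : (D × (E × F)) →ₗ[ℂ] V₀ :=
    LinearMap.coprod D.subtype (LinearMap.coprod E.subtype F.subtype) with hfdef
  have happ : ∀ x : D × (E × F), f x = ↑x.1 + (↑x.2.1 + ↑x.2.2) := by
    intro x; rfl
  have hinj : Function.Injective f := by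
    rw [← LinearMap.ker_eq_bot, eq_bot_iff]
    rintro ⟨u, v, w⟩ hx
    have h0 : (↑u + (↑v + ↑w) : V₀) = 0 := hx
    have hu : (↑u : V₀) ∈ D ⊓ (E ⊔ F) := by
      constructor
      · exact u.2
      · have huv : (↑u : V₀) = -(↑v + ↑w) := eq_neg_of_add_eq_zero_left h0
        rw [huv]
        exact neg_mem (add_mem (Submodule.mem_sup_left v.2) (Submodule.mem_sup_right w.2))
    rw [h1] at hu
    have hu0 : (↑u : V₀) = 0 := hu
    have hvw : (↑v + ↑w : V₀) = 0 := by rw [hu0, zero_add] at h0; exact h0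
    have hv : (↑v : V₀) ∈ E ⊓ F := by
      constructor
      · exact v.2
      · rw [eq_neg_of_add_eq_zero_left hvw]
        exact neg_mem w.2
    rw [h2] at hv
    have hv0 : (↑v : V₀) = 0 := hv
    have hw0 : (↑w : V₀) = 0 := by rw [hv0, zero_add] at hvw; exact hvw
    refine Submodule.mem_bot _ |>.2 ?_
    ext
    · exact hu0
    · exact hv0
    · exact hw0
  have hsurj : Function.Surjective f := by
    rw [← LinearMap.range_eq_top, hfdef, LinearMap.range_coprod, LinearMap.range_coprod,
      Submodule.range_subtype, Submodule.range_subtype, Submodule.range_subtype]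
    exact h3
  refine ⟨LinearEquiv.ofBijective f ⟨hinj, hsurj⟩, ?_, ?_, ?_⟩ <;>
    · intro u
      show f _ = _
      rw [happ]
      simp

/-- Glueing isomorphisms of the three summands into a global isomorphism. -/
lemma d4_glue {V W : Type*} [AddCommGroup V] [Module ℂ V] [FiniteDimensional ℂ V]
    [AddCommGroup W] [Module ℂ W] [FiniteDimensional ℂ W]
    (D E F : Submodule ℂ V) (D' E' F' : Submodule ℂ W)
    (h1 : D ⊓ (E ⊔ F) = ⊥) (h2 : E ⊓ F = ⊥) (h3 : D ⊔ (E ⊔ F) = ⊤)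
    (h1' : D' ⊓ (E' ⊔ F') = ⊥) (h2' : E' ⊓ F' = ⊥) (h3' : D' ⊔ (E' ⊔ F') = ⊤)
    (hd : finrank ℂ D = finrank ℂ D') (he : finrank ℂ E = finrank ℂ E')
    (hf : finrank ℂ F = finrank ℂ F') :
    ∃ φ : V ≃ₗ[ℂ] W, Submodule.map (φ : V →ₗ[ℂ] W) D = D' ∧
      Submodule.map (φ : V →ₗ[ℂ] W) E = E' ∧ Submodule.map (φ : V →ₗ[ℂ] W) F = F' := by
  obtain ⟨ψ, hψD, hψE, hψF⟩ := d4_mkEquiv D E F h1 h2 h3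
  obtain ⟨ψ', hψD', hψE', hψF'⟩ := d4_mkEquiv D' E' F' h1' h2' h3'
  let φD : D ≃ₗ[ℂ] D' := LinearEquiv.ofFinrankEq _ _ hd
  let φE : E ≃ₗ[ℂ] E' := LinearEquiv.ofFinrankEq _ _ he
  let φF : F ≃ₗ[ℂ] F' := LinearEquiv.ofFinrankEq _ _ hf
  let φ : V ≃ₗ[ℂ] W := ψ.symm.trans ((φD.prodCongr (φE.prodCongr φF)).trans ψ')
  have hptD : ∀ u : D, φ ↑u = ↑(φD u) := by
    intro u
    have : ψ.symm ↑u = (u, 0, 0) := by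
      rw [LinearEquiv.symm_apply_eq, hψD]
    show ψ' ((φD.prodCongr (φE.prodCongr φF)) (ψ.symm ↑u)) = ↑(φD u)
    rw [this]
    have : (φD.prodCongr (φE.prodCongr φF)) (u, 0, 0) = (φD u, 0, 0) := by
      simp [LinearEquiv.prodCongr_apply]
    rw [this, hψD']
  have hptE : ∀ v : E, φ ↑v = ↑(φE v) := by
    intro v
    have : ψ.symm ↑v = (0, v, 0) := by
      rw [LinearEquiv.symm_apply_eq, hψE]
    show ψ' ((φD.prodCongr (φE.prodCongr φF)) (ψ.symm ↑v)) = ↑(φE v)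
    rw [this]
    have : (φD.prodCongr (φE.prodCongr φF)) (0, v, 0) = (0, φE v, 0) := by
      simp [LinearEquiv.prodCongr_apply]
    rw [this, hψE']
  have hptF : ∀ w : F, φ ↑w = ↑(φF w) := by
    intro w
    have : ψ.symm ↑w = (0, 0, w) := by
      rw [LinearEquiv.symm_apply_eq, hψF]
    show ψ' ((φD.prodCongr (φE.prodCongr φF)) (ψ.symm ↑w)) = ↑(φF w)
    rw [this]
    have : (φD.prodCongr (φE.prodCongr φF)) (0, 0, w) = (0, 0, φF w) := by
      simp [LinearEquiv.prodCongr_apply]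
    rw [this, hψF']
  exact ⟨φ, d4_map_eq_of_pointwise φ D D' φD hptD, d4_map_eq_of_pointwise φ E E' φE hptE,
    d4_map_eq_of_pointwise φ F F' φF hptF⟩

/-- The invertible matrix associated with a linear automorphism of `Fin n → ℂ`. -/
noncomputable def d4EquivUnit {n : ℕ} (e : (Fin n → ℂ) ≃ₗ[ℂ] (Fin n → ℂ)) :
    (Matrix (Fin n) (Fin n) ℂ)ˣ where
  val := LinearMap.toMatrix' (e : (Fin n → ℂ) →ₗ[ℂ] (Fin n → ℂ))
  inv := LinearMap.toMatrix' (e.symm : (Fin n → ℂ) →ₗ[ℂ] (Fin n → ℂ))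
  val_inv := by
    rw [← LinearMap.toMatrix'_comp]
    have : ((e : (Fin n → ℂ) →ₗ[ℂ] (Fin n → ℂ)).comp
        (e.symm : (Fin n → ℂ) →ₗ[ℂ] (Fin n → ℂ))) = LinearMap.id :=
      LinearMap.ext fun x => by simp
    rw [this, LinearMap.toMatrix'_id]
  inv_val := by
    rw [← LinearMap.toMatrix'_comp]
    have : ((e.symm : (Fin n → ℂ) →ₗ[ℂ] (Fin n → ℂ)).comp
        (e : (Fin n → ℂ) →ₗ[ℂ] (Fin n → ℂ))) = LinearMap.id :=
      LinearMap.ext fun x => by simp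
    rw [this, LinearMap.toMatrix'_id]

/-- Transporting one arm of the quiver representation along an automorphism matching
the ranges. -/
lemma d4_arm {m n : ℕ} (M M' : Matrix (Fin n) (Fin m) ℂ)
    (hM : Function.Injective (Matrix.toLin' M)) (hM' : Function.Injective (Matrix.toLin' M'))
    (φ : (Fin n → ℂ) ≃ₗ[ℂ] (Fin n → ℂ))
    (hmap : Submodule.map (φ : (Fin n → ℂ) →ₗ[ℂ] (Fin n → ℂ))
        (LinearMap.range (Matrix.toLin' M)) = LinearMap.range (Matrix.toLin' M')) :
    ∃ g : (Matrix (Fin m) (Fin m) ℂ)ˣ,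
      M' = LinearMap.toMatrix' (φ : (Fin n → ℂ) →ₗ[ℂ] (Fin n → ℂ)) * M *
        ((g⁻¹ : (Matrix (Fin m) (Fin m) ℂ)ˣ) : Matrix (Fin m) (Fin m) ℂ) := by
  let eM := LinearEquiv.ofInjective (Matrix.toLin' M) hM
  let eM' := LinearEquiv.ofInjective (Matrix.toLin' M') hM'
  let φ₁ : (Fin m → ℂ) ≃ₗ[ℂ] (Fin m → ℂ) :=
    eM.trans ((φ.submoduleMap _).trans ((LinearEquiv.ofEq _ _ hmap).trans eM'.symm))
  have key : ∀ a, Matrix.toLin' M' (φ₁ a) = φ (Matrix.toLin' M a) := by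
    intro a
    simp [φ₁, eM, eM', LinearEquiv.trans_apply]
  have hcomp : (Matrix.toLin' M').comp (φ₁ : (Fin m → ℂ) →ₗ[ℂ] (Fin m → ℂ)) =
      (φ : (Fin n → ℂ) →ₗ[ℂ] (Fin n → ℂ)).comp (Matrix.toLin' M) :=
    LinearMap.ext fun a => key a
  have hmat : M' * LinearMap.toMatrix' (φ₁ : (Fin m → ℂ) →ₗ[ℂ] (Fin m → ℂ)) =
      LinearMap.toMatrix' (φ : (Fin n → ℂ) →ₗ[ℂ] (Fin n → ℂ)) * M := by
    have := congrArg LinearMap.toMatrix' hcomp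
    rwa [LinearMap.toMatrix'_comp, LinearMap.toMatrix'_comp, LinearMap.toMatrix'_toLin',
      LinearMap.toMatrix'_toLin'] at this
  refine ⟨d4EquivUnit φ₁, ?_⟩
  have hgval : ((d4EquivUnit φ₁ : (Matrix (Fin m) (Fin m) ℂ)ˣ) : Matrix (Fin m) (Fin m) ℂ) =
      LinearMap.toMatrix' (φ₁ : (Fin m → ℂ) →ₗ[ℂ] (Fin m → ℂ)) := rfl
  calc M' = M' * (((d4EquivUnit φ₁) : Matrix (Fin m) (Fin m) ℂ) *
        (((d4EquivUnit φ₁)⁻¹ : (Matrix (Fin m) (Fin m) ℂ)ˣ) : Matrix (Fin m) (Fin m) ℂ)) := by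
        rw [← Units.val_mul, mul_inv_cancel, Units.val_one, Matrix.mul_one]
    _ = M' * ((d4EquivUnit φ₁ : (Matrix (Fin m) (Fin m) ℂ)ˣ) : Matrix (Fin m) (Fin m) ℂ) *
        (((d4EquivUnit φ₁)⁻¹ : (Matrix (Fin m) (Fin m) ℂ)ˣ) : Matrix (Fin m) (Fin m) ℂ) := by
        rw [Matrix.mul_assoc]
    _ = LinearMap.toMatrix' (φ : (Fin n → ℂ) →ₗ[ℂ] (Fin n → ℂ)) * M *
        (((d4EquivUnit φ₁)⁻¹ : (Matrix (Fin m) (Fin m) ℂ)ˣ) : Matrix (Fin m) (Fin m) ℂ) := by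
        rw [hgval, hmat]

/-- The basic structural consequences of nonvanishing of the D4 semi-invariant. -/
lemma d4_structure {β₁ β₂ β₃ β₄ : ℕ} (h : β₁ + β₂ + β₃ = 2 * β₄)
    {X : Matrix (Fin β₄) (Fin β₁) ℂ} {Y : Matrix (Fin β₄) (Fin β₂) ℂ}
    {Z : Matrix (Fin β₄) (Fin β₃) ℂ} (hd : d4Det10 h X Y Z ≠ 0) :
    Function.Injective (Matrix.toLin' X) ∧ Function.Injective (Matrix.toLin' Y) ∧
      Function.Injective (Matrix.toLin' Z) ∧
      LinearMap.range (Matrix.toLin' X) ⊓ LinearMap.range (Matrix.toLin' Y) ⊓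
        LinearMap.range (Matrix.toLin' Z) = ⊥ ∧
      finrank ℂ (LinearMap.range (Matrix.toLin' X)) = β₁ ∧
      finrank ℂ (LinearMap.range (Matrix.toLin' Y)) = β₂ ∧
      finrank ℂ (LinearMap.range (Matrix.toLin' Z)) = β₃ := by
  have injX : Function.Injective (Matrix.toLin' X) := by
    rw [← LinearMap.ker_eq_bot, eq_bot_iff]
    intro a ha
    have ha' : X *ᵥ a = 0 := by rwa [LinearMap.mem_ker, Matrix.toLin'_apply] at ha
    have := d4_inj h hd a 0 0
      (by rw [Matrix.mulVec_zero, ha', add_zero])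
      (by rw [Matrix.mulVec_zero, Matrix.mulVec_zero, add_zero])
    simp only [Submodule.mem_bot]
    exact this.1
  have injY : Function.Injective (Matrix.toLin' Y) := by
    rw [← LinearMap.ker_eq_bot, eq_bot_iff]
    intro b hb
    have hb' : Y *ᵥ b = 0 := by rwa [LinearMap.mem_ker, Matrix.toLin'_apply] at hb
    have := d4_inj h hd 0 b 0
      (by rw [Matrix.mulVec_zero, hb', add_zero])
      (by rw [Matrix.mulVec_zero, hb', add_zero])
    simp only [Submodule.mem_bot]
    exact this.2.1
  have injZ : Function.Injective (Matrix.toLin' Z) := by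
    rw [← LinearMap.ker_eq_bot, eq_bot_iff]
    intro c hc
    have hc' : Z *ᵥ c = 0 := by rwa [LinearMap.mem_ker, Matrix.toLin'_apply] at hc
    have := d4_inj h hd 0 0 c
      (by rw [Matrix.mulVec_zero, Matrix.mulVec_zero, add_zero])
      (by rw [Matrix.mulVec_zero, hc', zero_add])
    simp only [Submodule.mem_bot]
    exact this.2.2
  refine ⟨injX, injY, injZ, ?_, ?_, ?_, ?_⟩
  · rw [eq_bot_iff]
    intro v hv
    simp only [Submodule.mem_inf, LinearMap.mem_range] at hv
    obtain ⟨⟨⟨a, ha⟩, ⟨b, hb⟩⟩, ⟨c, hc⟩⟩ := hv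
    rw [Matrix.toLin'_apply] at ha hb hc
    have := d4_inj h hd a (-b) c
      (by rw [Matrix.mulVec_neg, ha, hb, add_neg_cancel])
      (by rw [Matrix.mulVec_neg, hb, hc, neg_add_cancel])
    simp only [Submodule.mem_bot]
    rw [← ha, this.1, Matrix.mulVec_zero]
  · rw [LinearMap.finrank_range_of_inj injX, Module.finrank_fin_fun]
  · rw [LinearMap.finrank_range_of_inj injY, Module.finrank_fin_fun]
  · rw [LinearMap.finrank_range_of_inj injZ, Module.finrank_fin_fun]

/-- The complement of the zero locus of the D4 quiver semi-invariant is a single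
orbit of `GL(β₁) × GL(β₂) × GL(β₃) × GL(β₄)`. -/
theorem d4_nonvanishing_single_orbit (β₁ β₂ β₃ β₄ : ℕ)
    (hβ₁ : 0 < β₁) (hβ₂ : 0 < β₂) (hβ₃ : 0 < β₃) (hβ₄ : 0 < β₄)
    (h : β₁ + β₂ + β₃ = 2 * β₄)
    (X X' : Matrix (Fin β₄) (Fin β₁) ℂ) (Y Y' : Matrix (Fin β₄) (Fin β₂) ℂ)
    (Z Z' : Matrix (Fin β₄) (Fin β₃) ℂ)
    (hXYZ : d4Det10 h X Y Z ≠ 0) (hXYZ' : d4Det10 h X' Y' Z' ≠ 0) :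
    ∃ (g₁ : (Matrix (Fin β₁) (Fin β₁) ℂ)ˣ) (g₂ : (Matrix (Fin β₂) (Fin β₂) ℂ)ˣ)
      (g₃ : (Matrix (Fin β₃) (Fin β₃) ℂ)ˣ) (g₄ : (Matrix (Fin β₄) (Fin β₄) ℂ)ˣ),
      X' = (g₄ : Matrix (Fin β₄) (Fin β₄) ℂ) * X * ((g₁⁻¹ : _ˣ) : Matrix (Fin β₁) (Fin β₁) ℂ) ∧
      Y' = (g₄ : Matrix (Fin β₄) (Fin β₄) ℂ) * Y * ((g₂⁻¹ : _ˣ) : Matrix (Fin β₂) (Fin β₂) ℂ) ∧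
      Z' = (g₄ : Matrix (Fin β₄) (Fin β₄) ℂ) * Z * ((g₃⁻¹ : _ˣ) : Matrix (Fin β₃) (Fin β₃) ℂ) := by
  obtain ⟨injX, injY, injZ, habc, rkA, rkB, rkC⟩ := d4_structure h hXYZ
  obtain ⟨injX', injY', injZ', habc', rkA', rkB', rkC'⟩ := d4_structure h hXYZ'
  have hdim : finrank ℂ (Fin β₄ → ℂ) = β₄ := Module.finrank_fin_fun ℂ
  obtain ⟨h1, h2, h3, hA, hB, hC, rA, rB, rC⟩ :=
    d4_subspace_facts _ _ _ habc (by rw [rkA, rkB, rkC, hdim]; omega)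
  obtain ⟨h1', h2', h3', hA', hB', hC', rA', rB', rC'⟩ :=
    d4_subspace_facts _ _ _ habc' (by rw [rkA', rkB', rkC', hdim]; omega)
  obtain ⟨φ, hmD, hmE, hmF⟩ := d4_glue _ _ _ _ _ _ h1 h2 h3 h1' h2' h3'
    (by omega) (by omega) (by omega)
  have hmapA : Submodule.map (φ : (Fin β₄ → ℂ) →ₗ[ℂ] (Fin β₄ → ℂ))
      (LinearMap.range (Matrix.toLin' X)) = LinearMap.range (Matrix.toLin' X') := by
    rw [hA, Submodule.map_sup, hmD, hmE, ← hA']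
  have hmapB : Submodule.map (φ : (Fin β₄ → ℂ) →ₗ[ℂ] (Fin β₄ → ℂ))
      (LinearMap.range (Matrix.toLin' Y)) = LinearMap.range (Matrix.toLin' Y') := by
    rw [hB, Submodule.map_sup, hmD, hmF, ← hB']
  have hmapC : Submodule.map (φ : (Fin β₄ → ℂ) →ₗ[ℂ] (Fin β₄ → ℂ))
      (LinearMap.range (Matrix.toLin' Z)) = LinearMap.range (Matrix.toLin' Z') := by
    rw [hC, Submodule.map_sup, hmE, hmF, ← hC']
  obtain ⟨g₁, hg₁⟩ := d4_arm X X' injX injX' φ hmapA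
  obtain ⟨g₂, hg₂⟩ := d4_arm Y Y' injY injY' φ hmapB
  obtain ⟨g₃, hg₃⟩ := d4_arm Z Z' injZ injZ' φ hmapC
  exact ⟨g₁, g₂, g₃, d4EquivUnit φ, hg₁, hg₂, hg₃⟩
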